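/- Let n, ℓ : ℕ with 1 ≤ ℓ and ℓ ≤ n, and let hp be a proof that (ℓ : ℝ≥0∞) / n ≤ 1. Under the binomial distribution PMF.binomial ((ℓ : ℝ≥0∞)/n) hp n on Fin (n+1), the probability of the event {k : Fin (n+1) | (ℓ : ℝ)/2 ≤ |(k : ℝ) − (ℓ : ℝ)|} is at most ENNReal.ofReal (2 · Real.exp (−(ℓ : ℝ)/12)). -/

import Mathlib

open scoped ENNReal
open Finset

private lemma exp_le_inv_one_sub {x : ℝ} (hx : x < 1) : Real.exp x ≤ (1 - x)⁻¹ := by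
  have h1 : 1 - x ≤ Real.exp (-x) := by have := Real.add_one_le_exp (-x); linarith
  have h2 : 0 < 1 - x := by linarith
  rw [show Real.exp x = (Real.exp (-x))⁻¹ by rw [Real.exp_neg, inv_inv]]
  exact inv_anti₀ h2 h1

private lemma exp_two_fifths : Real.exp (2/5) ≤ 91/60 := by
  have h : Real.exp (2/5) = Real.exp (1/20) ^ 8 := by
    rw [← Real.exp_nat_mul]; norm_num
  have h2 : Real.exp (1/20) ≤ 20/19 := by
    have := exp_le_inv_one_sub (x := 1/20) (by norm_num)
    norm_num at this ⊢; linarith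
  calc Real.exp (2/5) = Real.exp (1/20) ^ 8 := h
    _ ≤ (20/19 : ℝ) ^ 8 := by
        exact pow_le_pow_left₀ (Real.exp_nonneg _) h2 8
    _ ≤ 91/60 := by norm_num

private lemma exp_neg_one : Real.exp (-1) ≤ 5/12 := by
  have h : (12/5 : ℝ) ≤ Real.exp 1 := by
    have := Real.exp_one_gt_d9; linarith
  rw [Real.exp_neg]
  calc (Real.exp 1)⁻¹ ≤ ((12:ℝ)/5)⁻¹ := inv_anti₀ (by norm_num) h
    _ = 5/12 := by norm_num

/-- Generic exponential-moment tail bound for the binomial sum. -/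
private lemma binom_tail (n : ℕ) (pr t a : ℝ) (h0 : 0 ≤ pr) (h1 : pr ≤ 1)
    (P : Fin (n+1) → Prop) [DecidablePred P] (hP : ∀ k : Fin (n+1), P k → t * a ≤ t * k) :
    ∑ k : Fin (n+1),
        (if P k then pr ^ (k:ℕ) * (1 - pr) ^ (n - (k:ℕ)) * (n.choose k : ℝ) else 0)
      ≤ Real.exp (n * pr * (Real.exp t - 1) - t * a) := by
  have hq : (0:ℝ) ≤ 1 - pr := by linarith
  have step1 : ∀ k : Fin (n+1),
      (if P k then pr ^ (k:ℕ) * (1 - pr) ^ (n - (k:ℕ)) * (n.choose k : ℝ) else 0)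
        ≤ Real.exp (-(t*a)) *
            ((pr * Real.exp t) ^ (k:ℕ) * (1 - pr) ^ (n - (k:ℕ)) * (n.choose k : ℝ)) := by
    intro k
    by_cases h : P k
    · rw [if_pos h]
      have hge : (1:ℝ) ≤ Real.exp (-(t*a)) * Real.exp (t * k) := by
        rw [← Real.exp_add]
        refine Real.one_le_exp ?_
        have := hP k h; linarith
      have hrw : Real.exp (-(t*a)) *
            ((pr * Real.exp t) ^ (k:ℕ) * (1 - pr) ^ (n - (k:ℕ)) * (n.choose k : ℝ))
          = (Real.exp (-(t*a)) * Real.exp (t * k)) *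
            (pr ^ (k:ℕ) * (1 - pr) ^ (n - (k:ℕ)) * (n.choose k : ℝ)) := by
        rw [mul_pow, show Real.exp t ^ (k:ℕ) = Real.exp (t * ((k:ℕ):ℝ)) by
          rw [← Real.exp_nat_mul, mul_comm]]
        ring
      rw [hrw]
      have hterm : 0 ≤ pr ^ (k:ℕ) * (1 - pr) ^ (n - (k:ℕ)) * (n.choose k : ℝ) := by positivity
      nlinarith
    · rw [if_neg h]; positivity
  calc ∑ k : Fin (n+1),
        (if P k then pr ^ (k:ℕ) * (1 - pr) ^ (n - (k:ℕ)) * (n.choose k : ℝ) else 0)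
      ≤ ∑ k : Fin (n+1), Real.exp (-(t*a)) *
            ((pr * Real.exp t) ^ (k:ℕ) * (1 - pr) ^ (n - (k:ℕ)) * (n.choose k : ℝ)) :=
        Finset.sum_le_sum fun k _ => step1 k
    _ = Real.exp (-(t*a)) * (pr * Real.exp t + (1 - pr)) ^ n := by
        rw [← Finset.mul_sum]
        congr 1
        rw [add_pow]
        exact Fin.sum_univ_eq_sum_range
          (fun k => (pr * Real.exp t) ^ k * (1 - pr) ^ (n - k) * (n.choose k : ℝ)) (n+1)
    _ ≤ Real.exp (-(t*a)) * Real.exp (n * pr * (Real.exp t - 1)) := by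
        refine mul_le_mul_of_nonneg_left ?_ (Real.exp_nonneg _)
        have hb0 : (0:ℝ) ≤ pr * Real.exp t + (1 - pr) := by positivity
        have hb : pr * Real.exp t + (1 - pr) ≤ Real.exp (pr * (Real.exp t - 1)) := by
          have := Real.add_one_le_exp (pr * (Real.exp t - 1)); linarith
        calc (pr * Real.exp t + (1 - pr)) ^ n ≤ Real.exp (pr * (Real.exp t - 1)) ^ n :=
              pow_le_pow_left₀ hb0 hb n
          _ = Real.exp (n * (pr * (Real.exp t - 1))) := (Real.exp_nat_mul _ n).symm
          _ = Real.exp (n * pr * (Real.exp t - 1)) := by ring_nf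
    _ = Real.exp (n * pr * (Real.exp t - 1) - t * a) := by
        rw [← Real.exp_add]; ring_nf

theorem binomial_chernoff_half (n ℓ : ℕ) (h1 : 1 ≤ ℓ) (h2 : ℓ ≤ n)
    (hp : (ℓ : ℝ≥0∞) / n ≤ 1) :
    (PMF.binomial ((ℓ : ℝ≥0∞) / n).toNNReal
        (by simpa using ENNReal.toNNReal_mono ENNReal.one_ne_top hp) n).toOuterMeasure
        {k : Fin (n + 1) | (ℓ : ℝ) / 2 ≤ |(k.val : ℝ) - (ℓ : ℝ)|} ≤
      ENNReal.ofReal (2 * Real.exp (-(ℓ : ℝ) / 12)) := by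
  classical
  have hn : 0 < n := lt_of_lt_of_le h1 h2
  have hnR : (0:ℝ) < n := by exact_mod_cast hn
  set pr : ℝ := (ℓ : ℝ) / n with hpr_def
  have hpr0 : 0 ≤ pr := by positivity
  have hpr1 : pr ≤ 1 := by
    rw [hpr_def, div_le_one hnR]; exact_mod_cast h2
  have hnpr : (n:ℝ) * pr = ℓ := by
    rw [hpr_def]; field_simp
  -- rewrite the ENNReal probability as ofReal of pr
  have hpE : (ℓ : ℝ≥0∞) / n = ENNReal.ofReal pr := by
    rw [hpr_def, ENNReal.ofReal_div_of_pos hnR, ENNReal.ofReal_natCast,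
      ENNReal.ofReal_natCast]
  have h1mp : 1 - (ℓ : ℝ≥0∞) / n = ENNReal.ofReal (1 - pr) := by
    rw [hpE, ENNReal.ofReal_sub _ hpr0, ENNReal.ofReal_one]
  set E : Set (Fin (n+1)) := {k : Fin (n + 1) | (ℓ : ℝ) / 2 ≤ |(k.val : ℝ) - (ℓ : ℝ)|} with hE
  set g : Fin (n+1) → ℝ := fun k => pr ^ (k:ℕ) * (1 - pr) ^ (n - (k:ℕ)) * (n.choose k : ℝ)
    with hg
  have hg0 : ∀ k, 0 ≤ g k := by
    intro k; rw [hg]; have : (0:ℝ) ≤ 1 - pr := by linarith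
    positivity
  -- the measure equals ofReal of a real sum
  have hpN : ((ℓ : ℝ≥0∞) / n).toNNReal = pr.toNNReal := by
    rw [hpE]; rfl
  have hmeas : (PMF.binomial ((ℓ : ℝ≥0∞) / n).toNNReal
        (by simpa using ENNReal.toNNReal_mono ENNReal.one_ne_top hp) n).toOuterMeasure E
      = ENNReal.ofReal (∑ k : Fin (n+1), if k ∈ E then g k else 0) := by
    rw [PMF.toOuterMeasure_apply, tsum_fintype,
      ENNReal.ofReal_sum_of_nonneg (fun k _ => by
        by_cases h : k ∈ E
        · rw [if_pos h]; exact hg0 k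
        · rw [if_neg h])]
    refine Finset.sum_congr rfl fun k _ => ?_
    rw [Set.indicator_apply]
    by_cases h : k ∈ E
    · rw [if_pos h, if_pos h, PMF.binomial_apply, hpN, hg]
      rw [show ((pr.toNNReal : ℝ≥0∞)) = ENNReal.ofReal pr from rfl]
      rw [show (1:ℝ≥0∞) - ENNReal.ofReal pr = ENNReal.ofReal (1 - pr) by
        rw [ENNReal.ofReal_sub _ hpr0, ENNReal.ofReal_one]]
      rw [Fin.val_last]
      rw [← ENNReal.ofReal_pow hpr0, ← ENNReal.ofReal_pow (by linarith),
        ← ENNReal.ofReal_natCast, ← ENNReal.ofReal_mul (by positivity),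
        ← ENNReal.ofReal_mul (mul_nonneg (pow_nonneg hpr0 _) (pow_nonneg (by linarith) _))]
    · rw [if_neg h, if_neg h, ENNReal.ofReal_zero]
  rw [hmeas]
  refine ENNReal.ofReal_le_ofReal ?_
  -- split the event into two tails
  set P₁ : Fin (n+1) → Prop := fun k => (k:ℝ) ≤ (ℓ:ℝ)/2 with hP₁
  set P₂ : Fin (n+1) → Prop := fun k => 3*(ℓ:ℝ)/2 ≤ (k:ℝ) with hP₂
  have hsplit : ∀ k : Fin (n+1), (if k ∈ E then g k else 0)
      ≤ (if P₁ k then g k else 0) + (if P₂ k then g k else 0) := by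
    intro k
    by_cases h : k ∈ E
    · rw [if_pos h]
      have hk : (ℓ:ℝ)/2 ≤ |(k:ℝ) - (ℓ:ℝ)| := h
      rcases le_abs.mp hk with h' | h'
      · have : P₂ k := by rw [hP₂]; simp only; linarith
        rw [if_pos this]
        have : (0:ℝ) ≤ if P₁ k then g k else 0 := by
          split
          exacts [hg0 k, le_rfl]
        linarith
      · have : P₁ k := by rw [hP₁]; simp only; linarith
        rw [if_pos this]
        have : (0:ℝ) ≤ if P₂ k then g k else 0 := by
          split
          exacts [hg0 k, le_rfl]
        linarith
    · rw [if_neg h]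
      have a1 : (0:ℝ) ≤ if P₁ k then g k else 0 := by
        split; exacts [hg0 k, le_rfl]
      have a2 : (0:ℝ) ≤ if P₂ k then g k else 0 := by
        split; exacts [hg0 k, le_rfl]
      linarith
  have t1 : ∑ k : Fin (n+1), (if P₁ k then g k else 0)
      ≤ Real.exp ((n:ℝ) * pr * (Real.exp (-1) - 1) - (-1) * ((ℓ:ℝ)/2)) := by
    refine binom_tail n pr (-1) ((ℓ:ℝ)/2) hpr0 hpr1 P₁ ?_
    intro k hk
    have hk' : (k:ℝ) ≤ (ℓ:ℝ)/2 := hk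
    linarith
  have t2 : ∑ k : Fin (n+1), (if P₂ k then g k else 0)
      ≤ Real.exp ((n:ℝ) * pr * (Real.exp (2/5) - 1) - (2/5) * (3*(ℓ:ℝ)/2)) := by
    refine binom_tail n pr (2/5) (3*(ℓ:ℝ)/2) hpr0 hpr1 P₂ ?_
    intro k hk
    have hk' : 3*(ℓ:ℝ)/2 ≤ (k:ℝ) := hk
    linarith
  have hl0 : (0:ℝ) ≤ ℓ := Nat.cast_nonneg ℓ
  have e1 : Real.exp ((n:ℝ) * pr * (Real.exp (-1) - 1) - (-1) * ((ℓ:ℝ)/2))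
      ≤ Real.exp (-(ℓ:ℝ)/12) := by
    refine Real.exp_le_exp.mpr ?_
    rw [hnpr]
    nlinarith [exp_neg_one]
  have e2 : Real.exp ((n:ℝ) * pr * (Real.exp (2/5) - 1) - (2/5) * (3*(ℓ:ℝ)/2))
      ≤ Real.exp (-(ℓ:ℝ)/12) := by
    refine Real.exp_le_exp.mpr ?_
    rw [hnpr]
    nlinarith [exp_two_fifths]
  calc ∑ k : Fin (n+1), (if k ∈ E then g k else 0)
      ≤ ∑ k : Fin (n+1), ((if P₁ k then g k else 0) + (if P₂ k then g k else 0)) :=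
        Finset.sum_le_sum fun k _ => hsplit k
    _ = (∑ k : Fin (n+1), (if P₁ k then g k else 0))
        + ∑ k : Fin (n+1), (if P₂ k then g k else 0) := Finset.sum_add_distrib
    _ ≤ Real.exp (-(ℓ:ℝ)/12) + Real.exp (-(ℓ:ℝ)/12) := by
        refine add_le_add (le_trans t1 e1) (le_trans t2 e2)
    _ = 2 * Real.exp (-(ℓ:ℝ)/12) := by ring
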